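/- Let d ≥ 2 and consider the Drasin–Sastry parameter construction. Suppose g : ℝ^d → ℝ^d is any map for which there exist constants c, C, R₀ > 0 and ε ∈ (0,1) such that c·L(‖x‖_∞) < ‖g(x)‖_∞ < C·L(‖x‖_∞) whenever ‖x‖_∞ ∈ [R₀, ∞) \ E_ε, where E_ε = ⋃_{m > n₀} [ε r_m, r_m]. Then there exists N₀ ∈ ℕ such that for all n ≥ N₀, g maps the set A_n = {x ∈ ℝ^d : 2 r_n < ‖x‖_∞ < ε r_{n+1}} into A_{n+1}. -/

import Mathlib

set_option maxHeartbeats 1000000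


/-- The maximum norm `‖x‖_∞ = max {|x₁|, …, |x_d|}` on `ℝ^d`. -/
noncomputable def maxNorm {d : ℕ} (x : EuclideanSpace ℝ (Fin d)) : ℝ :=
  ⨆ i : Fin d, |x i|

/-- Let `d ≥ 2` and consider the Drasin–Sastry parameter construction (given by the
data `n₀, R', ν, r, L` below). If `g : ℝ^d → ℝ^d` is any map such that
`c·L(‖x‖_∞) < ‖g(x)‖_∞ < C·L(‖x‖_∞)` whenever `‖x‖_∞ ∈ [R₀,∞) \ E_ε`, where
`E_ε = ⋃_{m > n₀} [ε r_m, r_m]`, then there exists `N₀` such that for all `n ≥ N₀`,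
`g` maps `A_n = {x : 2 r_n < ‖x‖_∞ < ε r_{n+1}}` into `A_{n+1}`. -/
theorem drasinSastry_maps_rings (d : ℕ) (hd : 2 ≤ d)
    (n₀ : ℕ) (hn₀ : 2 ≤ n₀) (R' : ℝ) (hR' : 4 < R')
    (ν : ℝ → ℝ) (r : ℕ → ℝ)
    (hν₀ : ∀ t : ℝ, 0 ≤ t → t ≤ R' → ν t = n₀)
    (hrn₀ : r n₀ = R')
    (hrec : ∀ n : ℕ, n₀ ≤ n → r (n + 1) = Real.exp (∫ t in (1 : ℝ)..(r n), ν t / t))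
    (hνlin : ∀ n : ℕ, n₀ ≤ n → ∀ t : ℝ, r n ≤ t → t ≤ r (n + 1) →
      ν t = (t - r n) / (r (n + 1) - r n) + n)
    (L : ℝ → ℝ) (hL : ∀ s : ℝ, L s = Real.exp (∫ t in (1 : ℝ)..s, ν t / t))
    (g : EuclideanSpace ℝ (Fin d) → EuclideanSpace ℝ (Fin d))
    (c C R₀ : ℝ) (hc : 0 < c) (hC : 0 < C) (hR₀ : 0 < R₀)
    (ε : ℝ) (hε0 : 0 < ε) (hε1 : ε < 1)
    (hg : ∀ x : EuclideanSpace ℝ (Fin d), R₀ ≤ maxNorm x →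
      (¬ ∃ m : ℕ, n₀ < m ∧ ε * r m ≤ maxNorm x ∧ maxNorm x ≤ r m) →
      c * L (maxNorm x) < maxNorm (g x) ∧ maxNorm (g x) < C * L (maxNorm x)) :
    ∃ N₀ : ℕ, ∀ n : ℕ, N₀ ≤ n →
      ∀ x : EuclideanSpace ℝ (Fin d),
        2 * r n < maxNorm x → maxNorm x < ε * r (n + 1) →
        2 * r (n + 1) < maxNorm (g x) ∧ maxNorm (g x) < ε * r (n + 2) := by
  have hn₀2 : (2:ℝ) ≤ (n₀:ℝ) := by exact_mod_cast hn₀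
  -- generic lower bound for the integral
  have hIlow : ∀ (m a b : ℝ), 0 < a → a ≤ b →
      IntervalIntegrable (fun t => ν t / t) MeasureTheory.volume a b →
      (∀ t ∈ Set.Icc a b, m ≤ ν t) →
      m * Real.log (b / a) ≤ ∫ t in a..b, ν t / t := by
    intro m a b ha hab hint hbnd
    have hc' : ContinuousOn (fun t : ℝ => m / t) (Set.uIcc a b) := by
      apply ContinuousOn.div continuousOn_const continuousOn_id
      intro t ht
      rw [Set.uIcc_of_le hab] at ht
      exact ne_of_gt (lt_of_lt_of_le ha ht.1)
    have hint2 : IntervalIntegrable (fun t : ℝ => m / t) MeasureTheory.volume a b :=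
      hc'.intervalIntegrable
    have h1 : (∫ t in a..b, m / t) = m * Real.log (b / a) := by
      have h0 : (0:ℝ) ∉ Set.uIcc a b := by
        rw [Set.uIcc_of_le hab]; intro h; exact absurd h.1 (by linarith)
      rw [show (fun t : ℝ => m / t) = fun t : ℝ => m * (1 / t) by funext t; ring]
      rw [intervalIntegral.integral_const_mul, integral_one_div h0]
    calc m * Real.log (b / a) = ∫ t in a..b, m / t := h1.symm
      _ ≤ ∫ t in a..b, ν t / t := by
          apply intervalIntegral.integral_mono_on hab hint2 hint
          intro t ht
          have htpos : (0:ℝ) < t := lt_of_lt_of_le ha ht.1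
          exact div_le_div_of_nonneg_right (hbnd t ht) htpos.le
  -- main induction: bounds, integrability, ν lower bound up to r n
  have key : ∀ n : ℕ, n₀ ≤ n → R' ≤ r n ∧
      IntervalIntegrable (fun t => ν t / t) MeasureTheory.volume 1 (r n) ∧
      (∀ t ∈ Set.Icc (1:ℝ) (r n), (n₀:ℝ) ≤ ν t) := by
    intro n hn
    induction n with
    | zero => omega
    | succ m ih =>
      rcases Nat.lt_or_ge m n₀ with h | h
      · -- m + 1 = n₀ : base case
        have hm : m + 1 = n₀ := by omega
        rw [hm, hrn₀]
        refine ⟨le_refl _, ?_, ?_⟩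
        · have hcont : ContinuousOn (fun t : ℝ => (n₀:ℝ) / t) (Set.uIcc (1:ℝ) R') := by
            apply ContinuousOn.div continuousOn_const continuousOn_id
            intro t ht
            rw [Set.uIcc_of_le (by linarith : (1:ℝ) ≤ R')] at ht
            show t ≠ 0
            have := ht.1; intro h; rw [h] at this; linarith
          have hint : IntervalIntegrable (fun t : ℝ => (n₀:ℝ) / t)
              MeasureTheory.volume 1 R' := hcont.intervalIntegrable
          rw [intervalIntegrable_iff_integrableOn_Ioc_of_le (by linarith : (1:ℝ) ≤ R')] at hint ⊢
          apply hint.congr_fun _ measurableSet_Ioc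
          intro t ht
          show (n₀:ℝ) / t = ν t / t
          rw [hν₀ t (by linarith [ht.1]) ht.2]
        · intro t ht
          rw [hν₀ t (by linarith [ht.1]) ht.2]
      · -- inductive step
        obtain ⟨h1, h2, h3⟩ := ih h
        have hrm1 : (1:ℝ) ≤ r m := by linarith
        have hrm0 : (0:ℝ) < r m := by linarith
        -- r (m+1) ≥ (r m)^2
        have hgrow : (r m)^2 ≤ r (m + 1) := by
          have hlow := hIlow 2 1 (r m) one_pos hrm1 h2 (fun t ht => le_trans hn₀2 (h3 t ht))
          rw [div_one] at hlow
          have : Real.exp (2 * Real.log (r m)) ≤ Real.exp (∫ t in (1:ℝ)..(r m), ν t / t) :=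
            Real.exp_le_exp.mpr hlow
          rw [hrec m h]
          calc (r m)^2 = Real.exp (Real.log (r m)) ^ 2 := by rw [Real.exp_log hrm0]
            _ = Real.exp ((2:ℕ) * Real.log (r m)) := by rw [Real.exp_nat_mul]
            _ ≤ _ := by push_cast; exact this
        have hrmm1 : r m ≤ r (m + 1) := le_trans (by nlinarith) hgrow
        refine ⟨le_trans h1 hrmm1, ?_, ?_⟩
        · -- integrability on [1, r (m+1)]
          have hd0 : (0:ℝ) < r (m + 1) - r m := by nlinarith
          have hcont : ContinuousOn
              (fun t : ℝ => ((t - r m) / (r (m + 1) - r m) + (m:ℝ)) / t)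
              (Set.uIcc (r m) (r (m + 1))) := by
            apply ContinuousOn.div
            · exact ((continuousOn_id.sub continuousOn_const).div_const _).add continuousOn_const
            · exact continuousOn_id
            · intro t ht
              rw [Set.uIcc_of_le hrmm1] at ht
              show t ≠ 0
              have := ht.1; intro h; rw [h] at this; linarith
          have hint : IntervalIntegrable
              (fun t : ℝ => ((t - r m) / (r (m + 1) - r m) + (m:ℝ)) / t)
              MeasureTheory.volume (r m) (r (m + 1)) := hcont.intervalIntegrable
          have hint2 : IntervalIntegrable (fun t => ν t / t)
              MeasureTheory.volume (r m) (r (m + 1)) := by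
            rw [intervalIntegrable_iff_integrableOn_Ioc_of_le hrmm1] at hint ⊢
            apply hint.congr_fun _ measurableSet_Ioc
            intro t ht
            show ((t - r m) / (r (m + 1) - r m) + (m:ℝ)) / t = ν t / t
            rw [hνlin m h t ht.1.le ht.2]
          exact h2.trans hint2
        · intro t ht
          rcases le_or_gt t (r m) with h' | h'
          · exact h3 t ⟨ht.1, h'⟩
          · rw [hνlin m h t h'.le ht.2]
            have : (0:ℝ) ≤ (t - r m) / (r (m + 1) - r m) :=
              div_nonneg (by linarith) (by nlinarith)
            have hmn : (n₀:ℝ) ≤ (m:ℝ) := by exact_mod_cast h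
            linarith
  -- growth facts
  have hgrow : ∀ n : ℕ, n₀ ≤ n → (r n)^2 ≤ r (n + 1) := by
    intro n hn
    obtain ⟨h1, h2, h3⟩ := key n hn
    have hrm1 : (1:ℝ) ≤ r n := by linarith
    have hrm0 : (0:ℝ) < r n := by linarith
    have hlow := hIlow 2 1 (r n) one_pos hrm1 h2 (fun t ht => le_trans hn₀2 (h3 t ht))
    rw [div_one] at hlow
    have h4 : Real.exp (2 * Real.log (r n)) ≤ Real.exp (∫ t in (1:ℝ)..(r n), ν t / t) :=
      Real.exp_le_exp.mpr hlow
    rw [hrec n hn]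
    calc (r n)^2 = Real.exp (Real.log (r n)) ^ 2 := by rw [Real.exp_log hrm0]
      _ = Real.exp ((2:ℕ) * Real.log (r n)) := by rw [Real.exp_nat_mul]
      _ ≤ _ := by push_cast; exact h4
  have hrpos : ∀ n : ℕ, n₀ ≤ n → 4 < r n := fun n hn => lt_of_lt_of_le hR' (key n hn).1
  have hstep : ∀ n : ℕ, n₀ ≤ n → r n + 1 ≤ r (n + 1) := by
    intro n hn
    have := hgrow n hn
    have := hrpos n hn
    nlinarith
  have hrmono : ∀ n m : ℕ, n₀ ≤ n → n ≤ m → r n ≤ r m := by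
    intro n m hn hnm
    induction m with
    | zero => omega
    | succ k ih =>
      rcases Nat.lt_or_ge k n with h | h
      · have : n = k + 1 := by omega
        rw [this]
      · exact le_trans (ih h) (by linarith [hstep k (le_trans hn h)])
  have hrbig : ∀ k : ℕ, R' + k ≤ r (n₀ + k) := by
    intro k
    induction k with
    | zero => simp [hrn₀]
    | succ j ih =>
      have := hstep (n₀ + j) (by omega)
      push_cast
      have : r (n₀ + j) + 1 ≤ r (n₀ + j + 1) := this
      calc R' + ((j:ℝ) + 1) = (R' + j) + 1 := by ring
        _ ≤ r (n₀ + j) + 1 := by linarith [ih]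
        _ ≤ r (n₀ + (j + 1)) := by rw [show n₀ + (j+1) = n₀ + j + 1 from rfl]; exact this
  -- L splitting
  have hLsplit : ∀ (N : ℕ), n₀ ≤ N → ∀ a b : ℝ, 1 ≤ a → a ≤ b → b ≤ r N →
      L b = L a * Real.exp (∫ t in a..b, ν t / t) := by
    intro N hN a b ha hab hb
    obtain ⟨-, h2, -⟩ := key N hN
    have hsub1 : IntervalIntegrable (fun t => ν t / t) MeasureTheory.volume 1 a := by
      apply h2.mono_set
      rw [Set.uIcc_of_le (by linarith : (1:ℝ) ≤ r N), Set.uIcc_of_le ha]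
      exact Set.Icc_subset_Icc le_rfl (by linarith)
    have hsub2 : IntervalIntegrable (fun t => ν t / t) MeasureTheory.volume a b := by
      apply h2.mono_set
      rw [Set.uIcc_of_le (by linarith : (1:ℝ) ≤ r N), Set.uIcc_of_le hab]
      exact Set.Icc_subset_Icc (by linarith) hb
    rw [hL a, hL b, ← Real.exp_add,
      intervalIntegral.integral_add_adjacent_intervals hsub1 hsub2]
  have hsubint : ∀ (N : ℕ), n₀ ≤ N → ∀ a b : ℝ, 1 ≤ a → a ≤ b → b ≤ r N →
      IntervalIntegrable (fun t => ν t / t) MeasureTheory.volume a b := by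
    intro N hN a b ha hab hb
    apply (key N hN).2.1.mono_set
    rw [Set.uIcc_of_le (by linarith : (1:ℝ) ≤ r N), Set.uIcc_of_le hab]
    exact Set.Icc_subset_Icc (by linarith) hb
  -- monotonicity of L
  have hLpos : ∀ s : ℝ, 0 < L s := fun s => by rw [hL s]; exact Real.exp_pos _
  have hLmono : ∀ (N : ℕ), n₀ ≤ N → ∀ a b : ℝ, 1 ≤ a → a ≤ b → b ≤ r N → L a ≤ L b := by
    intro N hN a b ha hab hb
    rw [hLsplit N hN a b ha hab hb]
    have hbnd : ∀ t ∈ Set.Icc a b, (0:ℝ) ≤ ν t := by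
      intro t ht
      have := (key N hN).2.2 t ⟨by linarith [ht.1], by linarith [ht.2]⟩
      linarith
    have := hIlow 0 a b (by linarith) hab (hsubint N hN a b ha hab hb) hbnd
    rw [zero_mul] at this
    nlinarith [Real.one_le_exp this, (hLpos a).le]
  -- choose N₀
  obtain ⟨n₁, hn₁⟩ : ∃ n₁ : ℕ, ∀ n ≥ n₁, 2 ≤ c * 2 ^ n := by
    have h2 : Filter.Tendsto (fun n : ℕ => c * 2 ^ n) Filter.atTop Filter.atTop :=
      (tendsto_pow_atTop_atTop_of_one_lt (by norm_num : (1:ℝ) < 2)).const_mul_atTop hc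
    exact Filter.eventually_atTop.mp (h2.eventually_ge_atTop 2)
  obtain ⟨n₂, hn₂⟩ : ∃ n₂ : ℕ, ∀ n ≥ n₂, C * ε ^ n ≤ ε := by
    have h2 : Filter.Tendsto (fun n : ℕ => C * ε ^ n) Filter.atTop (nhds (C * 0)) :=
      (tendsto_pow_atTop_nhds_zero_of_lt_one hε0.le hε1).const_mul C
    rw [mul_zero] at h2
    exact Filter.eventually_atTop.mp ((h2.eventually_lt_const hε0).mono fun n h => h.le)
  obtain ⟨k₃, hk₃⟩ : ∃ k : ℕ, max R₀ ε⁻¹ ≤ (k : ℝ) := exists_nat_ge _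
  refine ⟨n₀ + k₃ + n₁ + n₂, ?_⟩
  intro n hn x hx1 hx2
  have hnn₀ : n₀ ≤ n := by omega
  have hrn4 : 4 < r n := hrpos n hnn₀
  have hrnR₀ : R₀ ≤ r n := by
    have := hrbig k₃
    have h2 : r (n₀ + k₃) ≤ r n := hrmono _ _ (by omega) (by omega)
    have := le_max_left R₀ ε⁻¹
    linarith [hk₃]
  have hrnε : ε⁻¹ ≤ r n := by
    have := hrbig k₃
    have h2 : r (n₀ + k₃) ≤ r n := hrmono _ _ (by omega) (by omega)
    have := le_max_right R₀ ε⁻¹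
    linarith [hk₃]
  have hgrown : (r n)^2 ≤ r (n + 1) := hgrow n hnn₀
  have hgrown1 : (r (n+1))^2 ≤ r (n + 2) := hgrow (n+1) (by omega)
  have hrn1big : 4 < r (n + 1) := hrpos (n+1) (by omega)
  have h2rn : 2 * r n ≤ r (n + 1) := by nlinarith
  have hεrn : r n ≤ ε * r (n + 1) := by
    have h1 : 1 ≤ ε * r n := by
      have h2 := mul_le_mul_of_nonneg_left hrnε hε0.le
      rw [mul_inv_cancel₀ (ne_of_gt hε0)] at h2
      exact h2
    nlinarith
  set s := maxNorm x with hs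
  have hs1 : 2 * r n < s := hx1
  have hs2 : s < ε * r (n + 1) := hx2
  have hsrn1 : s < r (n + 1) := lt_of_lt_of_le hs2 (by nlinarith)
  have hsR₀ : R₀ ≤ s := by linarith
  have hnotE : ¬ ∃ m : ℕ, n₀ < m ∧ ε * r m ≤ s ∧ s ≤ r m := by
    rintro ⟨m, hm1, hm2, hm3⟩
    rcases le_or_gt m n with hmn | hmn
    · have : r m ≤ r n := hrmono m n hm1.le hmn
      linarith
    · have h4 : r (n + 1) ≤ r m := hrmono _ _ (by omega) hmn
      have : ε * r (n + 1) ≤ ε * r m := by nlinarith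
      linarith
  obtain ⟨hg1, hg2⟩ := hg x hsR₀ hnotE
  -- lower bound: 2 r_{n+1} < ‖g x‖
  have hνlow : ∀ t ∈ Set.Icc (r n) (r (n + 1)), (n:ℝ) ≤ ν t := by
    intro t ht
    rw [hνlin n hnn₀ t ht.1 ht.2]
    have : (0:ℝ) ≤ (t - r n) / (r (n + 1) - r n) :=
      div_nonneg (by linarith [ht.1]) (by nlinarith)
    linarith
  have hLrn : L (r n) = r (n + 1) := by rw [hL, ← hrec n hnn₀]
  have hLrn1 : L (r (n + 1)) = r (n + 2) := by rw [hL, ← hrec (n+1) (by omega)]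
  have hlower : 2 * r (n + 1) ≤ c * L (2 * r n) := by
    have hsplit := hLsplit (n+1) (by omega) (r n) (2 * r n) (by linarith) (by linarith) h2rn
    have hint := hsubint (n+1) (by omega) (r n) (2 * r n) (by linarith) (by linarith) h2rn
    have hIbnd := hIlow n (r n) (2 * r n) (by linarith) (by linarith) hint
      (fun t ht => hνlow t ⟨ht.1, le_trans ht.2 h2rn⟩)
    have hlog : (2 * r n) / r n = 2 := by field_simp
    rw [hlog] at hIbnd
    have hexp : ((2:ℝ) ^ n : ℝ) ≤ Real.exp (∫ t in (r n)..(2 * r n), ν t / t) := by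
      calc ((2:ℝ) ^ n : ℝ) = Real.exp (Real.log 2) ^ n := by rw [Real.exp_log (by norm_num)]
        _ = Real.exp ((n:ℝ) * Real.log 2) := by rw [Real.exp_nat_mul]
        _ ≤ _ := Real.exp_le_exp.mpr hIbnd
    have hLb : r (n + 1) * 2 ^ n ≤ L (2 * r n) := by
      rw [hsplit, hLrn]
      exact mul_le_mul_of_nonneg_left hexp (by linarith)
    have h2n := hn₁ n (by omega)
    nlinarith [hLpos (2 * r n)]
  have hLmono1 : L (2 * r n) ≤ L s :=
    hLmono (n+1) (by omega) (2 * r n) s (by linarith) hs1.le hsrn1.le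
  have lower : 2 * r (n + 1) < maxNorm (g x) := by
    have : c * L (2 * r n) ≤ c * L s := mul_le_mul_of_nonneg_left hLmono1 hc.le
    linarith
  -- upper bound: ‖g x‖ < ε r_{n+2}
  have hupper : C * L (ε * r (n + 1)) ≤ ε * r (n + 2) := by
    have hεr1 : 1 ≤ ε * r (n + 1) := by
      have h2 := mul_le_mul_of_nonneg_left hrnε hε0.le
      rw [mul_inv_cancel₀ (ne_of_gt hε0)] at h2
      nlinarith
    have hεrle : ε * r (n + 1) ≤ r (n + 1) := by nlinarith
    have hsplit := hLsplit (n+1) (by omega) (ε * r (n + 1)) (r (n + 1)) hεr1 hεrle le_rfl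
    have hint := hsubint (n+1) (by omega) (ε * r (n + 1)) (r (n + 1)) hεr1 hεrle le_rfl
    have hIbnd := hIlow n (ε * r (n + 1)) (r (n + 1)) (by linarith) hεrle hint
      (fun t ht => hνlow t ⟨le_trans hεrn ht.1, ht.2⟩)
    have hlog : r (n + 1) / (ε * r (n + 1)) = ε⁻¹ := by
      field_simp
    rw [hlog] at hIbnd
    have hexp : (ε⁻¹ ^ n : ℝ) ≤ Real.exp (∫ t in (ε * r (n + 1))..(r (n + 1)), ν t / t) := by
      calc (ε⁻¹ ^ n : ℝ) = Real.exp (Real.log ε⁻¹) ^ n := by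
            rw [Real.exp_log (by positivity)]
        _ = Real.exp ((n:ℝ) * Real.log ε⁻¹) := by rw [Real.exp_nat_mul]
        _ ≤ _ := Real.exp_le_exp.mpr hIbnd
    have hLeb : L (ε * r (n + 1)) * ε⁻¹ ^ n ≤ r (n + 2) := by
      rw [← hLrn1, hsplit]
      exact mul_le_mul_of_nonneg_left hexp (hLpos _).le
    have hLeb2 : L (ε * r (n + 1)) ≤ ε ^ n * r (n + 2) := by
      have hεn : (0:ℝ) < ε ^ n := by positivity
      have := mul_le_mul_of_nonneg_right hLeb hεn.le
      have hcancel : L (ε * r (n + 1)) * ε⁻¹ ^ n * ε ^ n = L (ε * r (n + 1)) := by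
        rw [mul_assoc, ← mul_pow, inv_mul_cancel₀ (ne_of_gt hε0), one_pow, mul_one]
      rw [hcancel] at this
      linarith [this]
    have hCε := hn₂ n (by omega)
    have hr2pos : (0:ℝ) < r (n + 2) := by linarith [hrpos (n+2) (by omega)]
    calc C * L (ε * r (n + 1)) ≤ C * (ε ^ n * r (n + 2)) :=
          mul_le_mul_of_nonneg_left hLeb2 hC.le
      _ = (C * ε ^ n) * r (n + 2) := by ring
      _ ≤ ε * r (n + 2) := mul_le_mul_of_nonneg_right hCε hr2pos.le
  have hLmono2 : L s ≤ L (ε * r (n + 1)) :=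
    hLmono (n+1) (by omega) s (ε * r (n + 1)) (by linarith) hs2.le (by nlinarith)
  have upper : maxNorm (g x) < ε * r (n + 2) := by
    have : C * L s ≤ C * L (ε * r (n + 1)) := mul_le_mul_of_nonneg_left hLmono2 hC.le
    linarith
  exact ⟨lower, upper⟩
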